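/- Let L be a binary ℤ₂-lattice with scale ℤ₂ whose ambient quadratic space over ℚ₂ is hyperbolic, and let s, t be integers with t > 2s = ord₂(dL). If z ∈ L is primitive with ord₂ Q(z) = t+1 and w ∈ L satisfies ord₂ B(z,w) = t, then ord₂ Q(w) ≥ t+2. -/

import Mathlib

open Matrix

section PadicHelpers

variable {p : ℕ} [hp : Fact p.Prime]

private lemma pval_mul {x y : ℤ_[p]} (hx : x ≠ 0) (hy : y ≠ 0) :
    ((x * y).valuation : ℤ) = x.valuation + y.valuation := by
  have hx' : (x : ℚ_[p]) ≠ 0 := PadicInt.coe_ne_zero.mpr hx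
  have hy' : (y : ℚ_[p]) ≠ 0 := PadicInt.coe_ne_zero.mpr hy
  exact_mod_cast PadicInt.valuation_mul hx hy

private lemma pval_nonneg (x : ℤ_[p]) : (0:ℤ) ≤ x.valuation := Nat.cast_nonneg _

private lemma pval_unit {u : ℤ_[p]} (hu : IsUnit u) : (u.valuation : ℤ) = 0 := by
  obtain ⟨v, hv⟩ := hu.exists_right_inv
  have hu0 : u ≠ 0 := by rintro rfl; simp at hv
  have hv0 : v ≠ 0 := by rintro rfl; simp at hv
  have h := pval_mul hu0 hv0
  rw [hv, PadicInt.valuation_one] at h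
  have h1 := pval_nonneg u
  have h2 := pval_nonneg v
  omega

private lemma pval_neg (x : ℤ_[p]) : ((-x).valuation : ℤ) = x.valuation := by
  rcases eq_or_ne x 0 with rfl | hx
  · simp
  · have h : -x = (-1) * x := by ring
    rw [h, pval_mul (by simp : (-1:ℤ_[p]) ≠ 0) hx, pval_unit isUnit_one.neg, zero_add]

private lemma pval_eq_of_norm_eq {x y : ℤ_[p]} (hx : x ≠ 0) (hy : y ≠ 0) (h : ‖x‖ = ‖y‖) :
    (x.valuation : ℤ) = y.valuation := by
  rw [PadicInt.norm_eq_zpow_neg_valuation hx, PadicInt.norm_eq_zpow_neg_valuation hy] at h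
  have hp1 : (1:ℝ) < p := by exact_mod_cast hp.out.one_lt
  have := (zpow_right_strictMono₀ hp1).injective h
  omega

private lemma pval_add_right {x y : ℤ_[p]} (hy : y ≠ 0)
    (h : x = 0 ∨ (y.valuation : ℤ) < x.valuation) :
    x + y ≠ 0 ∧ ((x + y).valuation : ℤ) = y.valuation := by
  rcases h with rfl | h
  · simpa using hy
  · have hx : x ≠ 0 := by
      rintro rfl
      rw [PadicInt.valuation_zero] at h
      exact absurd (pval_nonneg y) (not_le.mpr h)
    have hp1 : (1:ℝ) < p := by exact_mod_cast hp.out.one_lt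
    have hnorm : ‖x‖ < ‖y‖ := by
      rw [PadicInt.norm_eq_zpow_neg_valuation hx, PadicInt.norm_eq_zpow_neg_valuation hy]
      exact zpow_right_strictMono₀ hp1 (by omega)
    have hmax : ‖x + y‖ = ‖y‖ := by
      rw [PadicInt.norm_add_eq_max_of_ne (ne_of_lt hnorm), max_eq_right hnorm.le]
    have hxy : x + y ≠ 0 := by
      intro h0
      rw [h0, norm_zero] at hmax
      exact hy (norm_eq_zero.mp hmax.symm)
    exact ⟨hxy, pval_eq_of_norm_eq hxy hy hmax⟩

private lemma le_pval_of_dvd {x : ℤ_[p]} (hx : x ≠ 0) {n : ℕ} (h : (p:ℤ_[p])^n ∣ x) :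
    (n:ℤ) ≤ x.valuation := by
  obtain ⟨c, rfl⟩ := h
  have hc : c ≠ 0 := by rintro rfl; simp at hx
  rw [PadicInt.valuation_p_pow_mul n c hc]
  have := pval_nonneg c; omega

end PadicHelpers

private lemma two_dvd_iff (x : ℤ_[2]) : (2:ℤ_[2]) ∣ x ↔ PadicInt.toZMod x = 0 := by
  have h2 : ((2:ℕ):ℤ_[2]) = (2:ℤ_[2]) := by norm_num
  rw [← h2, ← Ideal.mem_span_singleton, ← PadicInt.maximalIdeal_eq_span_p,
    ← PadicInt.ker_toZMod, RingHom.mem_ker]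

/-- The square of a `2`-adic unit is `1` modulo `8`. -/
private lemma unit_sq {u : ℤ_[2]} (hu : IsUnit u) : (2:ℤ_[2])^3 ∣ u^2 - 1 := by
  have h1 : (2:ℤ_[2]) ∣ u - 1 := by
    rw [two_dvd_iff, map_sub, _root_.map_one]
    have hm : IsUnit (PadicInt.toZMod u) := hu.map _
    have h01 : PadicInt.toZMod u = 1 := by
      have hne := hm.ne_zero
      revert hne; generalize PadicInt.toZMod u = b; revert b; decide
    rw [h01, sub_self]
  obtain ⟨a, ha⟩ := h1
  have h2 : (2:ℤ_[2]) ∣ a^2 + a := by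
    rw [two_dvd_iff, map_add, map_pow]
    have : ∀ b : ZMod 2, b^2 + b = 0 := by decide
    exact this _
  obtain ⟨c, hc⟩ := h2
  refine ⟨c, ?_⟩
  have hu1 : u = 2*a + 1 := by linear_combination ha
  rw [hu1]
  linear_combination (4 : ℤ_[2]) * hc

/-- The scalar core of the argument: `Dt` plays the role of `dL`, `Qz = Q(z)`, `B = B(z,w)`,
`Qw = Q(w)`, `bb = B(z, v)` for a suitable second basis vector `v`, `g = Q(v)`,
`d` the determinant of the coordinates of `z, w`, and `u, u2` suitable units (the unit
coordinate of `z`). -/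
private lemma aux_main (Dt e Qz B Qw bb g d a u u2 : ℤ_[2]) (s t : ℤ)
    (hDt : Dt ≠ 0) (he : Dt = -e^2)
    (hst : 2*s = Dt.valuation) (hts : 2*s < t)
    (h1 : Qz*Qw - B^2 = Dt * d^2)
    (hu2 : IsUnit u2)
    (h2 : Qz*g - bb^2 = Dt * u2^2)
    (hu : IsUnit u)
    (h3 : u*B = a*Qz + d*bb)
    (hQz : Qz.valuation = t+1) (hB : B.valuation = t) :
    Qw = 0 ∨ t + 2 ≤ Qw.valuation := by
  have hs0 : 0 ≤ 2*s := hst ▸ pval_nonneg Dt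
  have ht1 : 1 ≤ t := by omega
  have hQz0 : Qz ≠ 0 := by
    rintro rfl; rw [PadicInt.valuation_zero] at hQz; omega
  have hB0 : B ≠ 0 := by
    rintro rfl; rw [PadicInt.valuation_zero] at hB; omega
  have he0 : e ≠ 0 := by rintro rfl; rw [he] at hDt; simp at hDt
  have hvale : e.valuation = s := by
    have h := pval_mul he0 he0
    have : Dt = -(e*e) := by rw [he]; ring
    rw [this, pval_neg, h] at hst; omega
  -- valuation of bb is s
  have hu20 : u2 ≠ 0 := hu2.ne_zero
  have hDu : Dt * u2^2 ≠ 0 := mul_ne_zero hDt (pow_ne_zero 2 hu20)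
  have hvalDu : (Dt * u2^2).valuation = 2*s := by
    rw [pval_mul hDt (pow_ne_zero 2 hu20), sq, pval_mul hu20 hu20, pval_unit hu2]; omega
  have hbbsq : bb^2 = Qz*g + -(Dt*u2^2) := by linear_combination -h2
  have hbb2 : bb^2 ≠ 0 ∧ (bb^2).valuation = 2*s := by
    rw [hbbsq]
    have := pval_add_right (x := Qz*g) (y := -(Dt*u2^2)) (by simpa using hDu) ?_
    · rwa [pval_neg, hvalDu] at this
    · rcases eq_or_ne g 0 with rfl | hg
      · left; ring
      · right
        rw [pval_neg, hvalDu, pval_mul hQz0 hg, hQz]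
        have := pval_nonneg g; omega
  have hbb0 : bb ≠ 0 := by
    intro h0; rw [h0] at hbb2; simp at hbb2
  have hvalbb : bb.valuation = s := by
    have := hbb2.2; rw [sq, pval_mul hbb0 hbb0] at this; omega
  -- valuation of d is t - s
  have hdbb : d*bb = a*Qz*(-1) + u*B := by linear_combination -h3
  have hdbbfact : d*bb ≠ 0 ∧ (d*bb).valuation = t := by
    have huB0 : u*B ≠ 0 := mul_ne_zero hu.ne_zero hB0
    have := pval_add_right (x := a*Qz*(-1)) (y := u*B) huB0 ?_
    · rw [← hdbb] at this
      rwa [pval_mul hu.ne_zero hB0, pval_unit hu, hB, zero_add] at this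
    · rcases eq_or_ne a 0 with rfl | ha
      · left; ring
      · right
        have hne : a*Qz*(-1) ≠ 0 := by
          simp [mul_ne_zero ha hQz0]
        have : (a*Qz*(-1)).valuation = a.valuation + (t+1) := by
          have hh : a*Qz*(-1) = -(a*Qz) := by ring
          rw [hh, pval_neg, pval_mul ha hQz0, hQz]
        rw [pval_mul hu.ne_zero hB0, pval_unit hu, hB, zero_add, this]
        have := pval_nonneg a; omega
  have hd0 : d ≠ 0 := fun h0 => hdbbfact.1 (by rw [h0]; ring)
  have hvald : d.valuation = t - s := by
    have := hdbbfact.2; rw [pval_mul hd0 hbb0, hvalbb] at this; omega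
  -- c = e*d has valuation t
  set c : ℤ_[2] := e*d with hc
  have hc0 : c ≠ 0 := mul_ne_zero he0 hd0
  have hvalc : c.valuation = t := by
    rw [hc, pval_mul he0 hd0, hvale, hvald]; omega
  -- key identity
  have hkey : Qz*Qw = B^2 - c^2 := by
    rw [hc]; linear_combination h1 + d^2 * he
  -- unit decompositions
  have hnt : (t.natAbs:ℤ) = t := Int.natAbs_of_nonneg (by omega)
  have h22 : ((2:ℕ):ℤ_[2]) = (2:ℤ_[2]) := by norm_num
  have hBspec := PadicInt.unitCoeff_spec hB0
  have hcspec := PadicInt.unitCoeff_spec hc0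
  rw [(by omega : B.valuation = t.natAbs), h22] at hBspec
  rw [(by omega : c.valuation = t.natAbs), h22] at hcspec
  set uB := PadicInt.unitCoeff hB0
  set uC := PadicInt.unitCoeff hc0
  obtain ⟨c1, hc1⟩ := unit_sq uB.isUnit
  obtain ⟨c2, hc2⟩ := unit_sq uC.isUnit
  have hdvd : (2:ℤ_[2])^(t.natAbs*2+3) ∣ Qz*Qw := by
    refine ⟨c1 - c2, ?_⟩
    rw [hkey, hBspec, hcspec]
    have hpow : (2:ℤ_[2])^(t.natAbs*2+3) = ((2:ℤ_[2])^t.natAbs)^2 * 2^3 := by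
      rw [← pow_mul, ← pow_add]
    rw [hpow]
    linear_combination (((2:ℤ_[2])^t.natAbs)^2) * hc1 - (((2:ℤ_[2])^t.natAbs)^2) * hc2
  rcases eq_or_ne Qw 0 with rfl | hQw
  · exact Or.inl rfl
  · right
    have hQzQw : Qz*Qw ≠ 0 := mul_ne_zero hQz0 hQw
    have hle := le_pval_of_dvd hQzQw (by
      have : ((2:ℕ):ℤ_[2]) = (2:ℤ_[2]) := by norm_num
      rwa [this])
    rw [pval_mul hQz0 hQw, hQz] at hle
    push_cast at hle
    rw [abs_of_nonneg (by omega : (0:ℤ) ≤ t)] at hle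
    omega

/-- Let `L` be a binary `ℤ₂`-lattice with scale `ℤ₂` (some entry of the Gram matrix `G` is a
unit) whose ambient `ℚ₂`-space is hyperbolic.  Let `s, t` be integers with `t > 2s = ord₂(dL)`.
If `z ∈ L` is primitive with `ord₂ Q(z) = t + 1` and `w ∈ L` satisfies `ord₂ B(z,w) = t`, then
`ord₂ Q(w) ≥ t + 2`. -/
theorem valuation_Q_w_ge
    (G : Matrix (Fin 2) (Fin 2) ℤ_[2]) (hsymm : G.IsSymm) (hdet : G.det ≠ 0)
    (hscale : ∃ i j, IsUnit (G i j))
    (hhyp : ∃ T : Matrix (Fin 2) (Fin 2) ℚ_[2], IsUnit T.det ∧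
      Tᵀ * G.map (fun x => (x : ℚ_[2])) * T = !![0, 1; 1, 0])
    (s t : ℤ) (hst : 2 * s = G.det.valuation) (hts : 2 * s < t)
    (z w : Fin 2 → ℤ_[2]) (hz : IsUnit (z 0) ∨ IsUnit (z 1))
    (hQz : (z ⬝ᵥ G.mulVec z).valuation = t + 1)
    (hBzw : (z ⬝ᵥ G.mulVec w).valuation = t) :
    w ⬝ᵥ G.mulVec w = 0 ∨ t + 2 ≤ (w ⬝ᵥ G.mulVec w).valuation := by
  -- Hyperbolicity gives `det G = -e²` for some `e : ℤ_[2]`.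
  obtain ⟨e, he⟩ : ∃ e : ℤ_[2], G.det = -e^2 := by
    obtain ⟨T, hT, hTG⟩ := hhyp
    have hdetmap : (G.map (fun x => (x : ℚ_[2]))).det = (G.det : ℚ_[2]) := by
      have h1 : G.map (fun x => (x : ℚ_[2])) = G.map (PadicInt.Coe.ringHom (p := 2)) := rfl
      rw [h1]
      exact (RingHom.map_det (PadicInt.Coe.ringHom (p := 2)) G).symm
    have hdeteq : (G.det : ℚ_[2]) * T.det^2 = -1 := by
      have h := congrArg Matrix.det hTG
      rw [Matrix.det_mul, Matrix.det_mul, Matrix.det_transpose, hdetmap] at h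
      rw [Matrix.det_fin_two_of] at h
      linear_combination h
    have hTd : T.det ≠ 0 := hT.ne_zero
    set f : ℚ_[2] := (T.det)⁻¹ with hf
    have hfe : (G.det : ℚ_[2]) = -(f^2) := by
      rw [hf, inv_pow, eq_neg_iff_add_eq_zero, ← mul_right_inj' (pow_ne_zero 2 hTd), mul_add,
        mul_inv_cancel₀ (pow_ne_zero 2 hTd), mul_zero]
      linear_combination hdeteq
    have hnf : ‖f‖ ≤ 1 := by
      have h1 : ‖f‖^2 = ‖(G.det : ℚ_[2])‖ := by
        rw [hfe, norm_neg, ← norm_pow]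
      have h2 : ‖(G.det : ℚ_[2])‖ ≤ 1 := G.det.2
      nlinarith [norm_nonneg f]
    refine ⟨⟨f, hnf⟩, ?_⟩
    apply Subtype.coe_injective
    push_cast
    rw [hfe]
    rfl
  have hGsym : G 1 0 = G 0 1 := hsymm.apply 0 1
  have hexp : ∀ x y : Fin 2 → ℤ_[2], x ⬝ᵥ G.mulVec y =
      x 0 * (G 0 0 * y 0 + G 0 1 * y 1) + x 1 * (G 1 0 * y 0 + G 1 1 * y 1) := by
    intro x y; simp [dotProduct, Matrix.mulVec, Fin.sum_univ_two]
  have hdet2 : G.det = G 0 0 * G 1 1 - G 0 1 * G 1 0 := Matrix.det_fin_two G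
  rcases hz with hz0 | hz1
  · exact aux_main G.det e (z ⬝ᵥ G.mulVec z) (z ⬝ᵥ G.mulVec w) (w ⬝ᵥ G.mulVec w)
      (z 0 * G 0 1 + z 1 * G 1 1) (G 1 1) (z 0 * w 1 - z 1 * w 0) (w 0) (z 0) (z 0)
      s t hdet he hst hts
      (by rw [hexp z z, hexp z w, hexp w w, hdet2, hGsym]; ring)
      hz0
      (by rw [hexp z z, hdet2, hGsym]; ring)
      hz0
      (by rw [hexp z z, hexp z w, hGsym]; ring)
      hQz hBzw
  · exact aux_main G.det e (z ⬝ᵥ G.mulVec z) (z ⬝ᵥ G.mulVec w) (w ⬝ᵥ G.mulVec w)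
      (z 1 * G 1 0 + z 0 * G 0 0) (G 0 0) (z 1 * w 0 - z 0 * w 1) (w 1) (z 1) (z 1)
      s t hdet he hst hts
      (by rw [hexp z z, hexp z w, hexp w w, hdet2, hGsym]; ring)
      hz1
      (by rw [hexp z z, hdet2, hGsym]; ring)
      hz1
      (by rw [hexp z z, hexp z w, hGsym]; ring)
      hQz hBzw
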